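/- For every t ∈ (t₀, t_N], with s = t − t₀, the exponentially weighted integral of a dyadic step function has the closed form (1/τ)·∫_{t₀}^{t} e^{(α−t)/τ}·f_A^n(α) dα = Σ_{k=0}^{2ⁿ−1} a_k · e^{−s/τ} · (e^{γmax(s,k)} − e^{γmin(k)}) · 𝟙(γmin(k) < γmax(s,k)), where γmin(k) = k·Δt/(2ⁿ·τ) and γmax(s,k) = min{(k+1)·Δt/(2ⁿ·τ), s/τ}. -/

import Mathlib

open MeasureTheory intervalIntegral

/-- The dyadic step function on `[t₀, tN)` determined by a coefficient vector
`A ∈ ℝ^(2^n)`: it takes the value `A k` on the interval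
`[t₀ + k·Δt/2^n, t₀ + (k+1)·Δt/2^n)` where `Δt = tN - t₀`, and `0` outside `[t₀, tN)`. -/
noncomputable def dyadicStep (t₀ tN : ℝ) (n : ℕ) (A : Fin (2 ^ n) → ℝ) (α : ℝ) : ℝ :=
  ∑ k : Fin (2 ^ n),
    if t₀ + ((k : ℕ) : ℝ) * (tN - t₀) / 2 ^ n ≤ α ∧
        α < t₀ + (((k : ℕ) : ℝ) + 1) * (tN - t₀) / 2 ^ n
    then A k else 0

/-- equation (20) of the paper: closed form for the exponentially
weighted integral of a dyadic step function, for any `t ∈ (t₀, t_N]`, with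
`s = t - t₀`, `γmin(k) = k·Δt/(2^n·τ)` and `γmax(s,k) = min{(k+1)·Δt/(2^n·τ), s/τ}`. -/
theorem exp_weighted_integral_of_dyadicStep
    (τ t₀ tN : ℝ) (hτ : 0 < τ) (h : t₀ < tN)
    (n : ℕ) (A : Fin (2 ^ n) → ℝ)
    (t : ℝ) (ht : t ∈ Set.Ioc t₀ tN) :
    (1 / τ) * ∫ α in t₀..t, Real.exp ((α - t) / τ) * dyadicStep t₀ tN n A α =
    ∑ k : Fin (2 ^ n),
      A k * Real.exp (-(t - t₀) / τ) *
        (Real.exp (min ((((k : ℕ) : ℝ) + 1) * (tN - t₀) / (2 ^ n * τ)) ((t - t₀) / τ)) -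
          Real.exp (((k : ℕ) : ℝ) * (tN - t₀) / (2 ^ n * τ))) *
        (if ((k : ℕ) : ℝ) * (tN - t₀) / (2 ^ n * τ) <
            min ((((k : ℕ) : ℝ) + 1) * (tN - t₀) / (2 ^ n * τ)) ((t - t₀) / τ)
          then 1 else 0) := by
  obtain ⟨ht0, htN⟩ := ht
  have hτ' : τ ≠ 0 := ne_of_gt hτ
  -- rewrite each summand as an indicator
  have hfun : ∀ l r c : ℝ,
      (fun α => Real.exp ((α - t) / τ) * (if l ≤ α ∧ α < r then c else 0)) =
      (Set.Ico l r).indicator (fun α => Real.exp ((α - t) / τ) * c) := by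
    intro l r c
    funext α
    simp only [Set.indicator_apply, Set.mem_Ico]
    split_ifs <;> simp
  have hint : ∀ l r c : ℝ, IntervalIntegrable
      (fun α => Real.exp ((α - t) / τ) * (if l ≤ α ∧ α < r then c else 0)) volume t₀ t := by
    intro l r c
    rw [hfun]
    have hc : Continuous fun α : ℝ => Real.exp ((α - t) / τ) * c := by continuity
    rw [intervalIntegrable_iff]
    exact (hc.integrableOn_uIoc).indicator measurableSet_Ico
  -- per-term computation
  have key : ∀ k : Fin (2 ^ n),
      (∫ α in t₀..t, Real.exp ((α - t) / τ) *
        (if t₀ + ((k : ℕ) : ℝ) * (tN - t₀) / 2 ^ n ≤ α ∧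
            α < t₀ + (((k : ℕ) : ℝ) + 1) * (tN - t₀) / 2 ^ n then A k else 0)) =
      τ * (A k * Real.exp (-(t - t₀) / τ) *
        (Real.exp (min ((((k : ℕ) : ℝ) + 1) * (tN - t₀) / (2 ^ n * τ)) ((t - t₀) / τ)) -
          Real.exp (((k : ℕ) : ℝ) * (tN - t₀) / (2 ^ n * τ))) *
        (if ((k : ℕ) : ℝ) * (tN - t₀) / (2 ^ n * τ) <
            min ((((k : ℕ) : ℝ) + 1) * (tN - t₀) / (2 ^ n * τ)) ((t - t₀) / τ)
          then 1 else 0)) := by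
    intro k
    set l : ℝ := t₀ + ((k : ℕ) : ℝ) * (tN - t₀) / 2 ^ n with hl
    set r : ℝ := t₀ + (((k : ℕ) : ℝ) + 1) * (tN - t₀) / 2 ^ n with hr
    set m : ℝ := min r t with hm
    have ht0l : t₀ ≤ l := by
      have h0 : (0:ℝ) ≤ ((k : ℕ) : ℝ) * (tN - t₀) / 2 ^ n :=
        div_nonneg (mul_nonneg (Nat.cast_nonneg _) (by linarith)) (by positivity)
      rw [hl]; exact le_add_of_nonneg_right h0
    -- gamma identities
    have hγmin : ((k : ℕ) : ℝ) * (tN - t₀) / (2 ^ n * τ) = (l - t₀) / τ := by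
      rw [hl]; field_simp; ring
    have hγmax : min ((((k : ℕ) : ℝ) + 1) * (tN - t₀) / (2 ^ n * τ)) ((t - t₀) / τ)
        = (m - t₀) / τ := by
      have h1 : (((k : ℕ) : ℝ) + 1) * (tN - t₀) / (2 ^ n * τ) = (r - t₀) / τ := by
        rw [hr]; field_simp; ring
      rw [h1, min_div_div_right hτ.le, min_sub_sub_right, hm]
    have hlmiff : (((k : ℕ) : ℝ) * (tN - t₀) / (2 ^ n * τ) <
        min ((((k : ℕ) : ℝ) + 1) * (tN - t₀) / (2 ^ n * τ)) ((t - t₀) / τ)) ↔ l < m := by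
      rw [hγmin, hγmax, div_lt_div_iff_of_pos_right hτ, sub_lt_sub_iff_right]
    rw [hfun, intervalIntegral.integral_of_le ht0.le,
      setIntegral_indicator measurableSet_Ico]
    have hset : (Set.Ioc t₀ t ∩ Set.Ico l r : Set ℝ) =ᵐ[volume] Set.Ioc l m := by
      have h1 : (Set.Ioc t₀ t ∩ Set.Ico l r : Set ℝ) =ᵐ[volume]
          (Set.Ioc t₀ t ∩ Set.Ioc l r : Set ℝ) :=
        Filter.EventuallyEq.inter (by rfl) Ico_ae_eq_Ioc
      have h2 : (Set.Ioc t₀ t ∩ Set.Ioc l r : Set ℝ) = Set.Ioc l m := by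
        rw [Set.Ioc_inter_Ioc, sup_eq_right.mpr ht0l, hm, min_comm]
      rw [← h2]; exact h1
    rw [setIntegral_congr_set hset]
    by_cases hlm : l < m
    · rw [← intervalIntegral.integral_of_le hlm.le]
      have hderiv : ∀ α : ℝ, HasDerivAt (fun x : ℝ => τ * Real.exp ((x - t) / τ))
          (Real.exp ((α - t) / τ)) α := by
        intro α
        have h1 : HasDerivAt (fun x : ℝ => (x - t) / τ) (1 / τ) α :=
          ((hasDerivAt_id α).sub_const t).div_const τ
        have h2 := ((Real.hasDerivAt_exp ((α - t) / τ)).comp α h1).const_mul τ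
        rw [show Real.exp ((α - t) / τ) = τ * (Real.exp ((α - t) / τ) * (1 / τ)) by field_simp]
        exact h2
      have hci : IntervalIntegrable (fun α : ℝ => Real.exp ((α - t) / τ)) volume l m :=
        (by continuity : Continuous fun α : ℝ => Real.exp ((α - t) / τ)).intervalIntegrable l m
      rw [intervalIntegral.integral_mul_const,
        intervalIntegral.integral_eq_sub_of_hasDerivAt (fun x _ => hderiv x) hci]
      rw [if_pos (hlmiff.mpr hlm)]
      have e1 : Real.exp (-(t - t₀) / τ) * Real.exp ((m - t₀) / τ) = Real.exp ((m - t) / τ) := by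
        rw [← Real.exp_add]; congr 1; field_simp; ring
      have e2 : Real.exp (-(t - t₀) / τ) * Real.exp ((l - t₀) / τ) = Real.exp ((l - t) / τ) := by
        rw [← Real.exp_add]; congr 1; field_simp; ring
      rw [hγmin, hγmax, mul_one]
      linear_combination τ * A k * e2 - τ * A k * e1
    · rw [Set.Ioc_eq_empty hlm, setIntegral_empty, if_neg (fun hc => hlm (hlmiff.mp hc))]
      ring
  unfold dyadicStep
  simp_rw [Finset.mul_sum]
  rw [intervalIntegral.integral_finset_sum (fun k _ => hint _ _ (A k)), Finset.mul_sum]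
  refine Finset.sum_congr rfl fun k _ => ?_
  rw [key k, ← mul_assoc, one_div_mul_cancel hτ', one_mul]
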